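/- arXiv:1907.02396 — 9 statements merged into one kernel-verified Lean document; each statement's English description precedes it below -/
import Mathlib

section
/- Let G be a finite group and φ a coprime automorphism of G (i.e., the order of φ is coprime to |G|). If N is a φ-invariant normal subgroup of G contained in the fixed-point subgroup G_φ = {x ∈ G : x^φ = x}, then the subgroup [G,φ] generated by {x⁻¹·x^φ : x ∈ G} centralizes N. -/
/-- If `φ` is a coprime automorphism of a finite group `G` and `N` is a
`φ`-invariant normal subgroup of `G` contained in the fixed-point subgroup `G_φ`,
then `[G,φ]` (generated by `{x⁻¹ · φ x}`) centralizes `N`. -/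
theorem stmt_0 {G : Type*} [Group G] [Finite G] (φ : MulAut G)
    (hcop : (Nat.card G).Coprime (orderOf φ))
    (N : Subgroup G) [N.Normal]
    (hinv : ∀ x ∈ N, φ x ∈ N)
    (hfix : ∀ x ∈ N, φ x = x)
    (g : G) (hg : g ∈ Subgroup.closure (Set.range fun x : G => x⁻¹ * φ x))
    (n : G) (hn : n ∈ N) : g * n = n * g := by
  induction hg using Subgroup.closure_induction with
  | mem x hx =>
    obtain ⟨y, rfl⟩ := hx
    have h1 : φ (y * n * y⁻¹) = y * n * y⁻¹ :=
      hfix _ (Subgroup.Normal.conj_mem ‹N.Normal› n hn y)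
    have h2 : φ y * n * (φ y)⁻¹ = y * n * y⁻¹ := by
      simpa [map_mul, hfix n hn] using h1
    have h3 : φ y * n = y * n * y⁻¹ * φ y := by
      rw [← h2]; group
    calc y⁻¹ * φ y * n = y⁻¹ * (φ y * n) := by group
      _ = y⁻¹ * (y * n * y⁻¹ * φ y) := by rw [h3]
      _ = n * (y⁻¹ * φ y) := by group
  | one => simp
  | mul a b _ _ iha ihb =>
    calc a * b * n = a * (b * n) := by group
      _ = a * n * b := by rw [ihb]; group
      _ = n * (a * b) := by rw [iha]; group
  | inv a _ iha =>
    have : n * a = a * n := iha.symm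
    calc a⁻¹ * n = a⁻¹ * n * a * a⁻¹ := by group
      _ = a⁻¹ * (n * a) * a⁻¹ := by group
      _ = n * a⁻¹ := by rw [this]; group
end

section
/- Let G be a finite group and φ a coprime automorphism of G. Then G = G_{-φ}·G_φ (every element of G can be written as a product of an element of G_{-φ} and an element of G_φ) if and only if no nontrivial element of G_{-φ} is conjugate in G to an element of G_φ. -/
/-- For a coprime automorphism `φ` of a finite group `G`,
`G = G_{-φ}·G_φ` iff no nontrivial element of `G_{-φ}` is conjugate in `G`
to an element of `G_φ`. -/
theorem stmt_1 {G : Type*} [Group G] [Finite G] (φ : MulAut G)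
    (hcop : (Nat.card G).Coprime (orderOf φ)) :
    (∀ x : G, ∃ g h : G, (∃ y : G, y⁻¹ * φ y = g) ∧ φ h = h ∧ x = g * h) ↔
      (∀ a : G, (∃ y : G, y⁻¹ * φ y = a) → ∀ c : G, φ (c⁻¹ * a * c) = c⁻¹ * a * c → a = 1) := by
  classical
  set S : Set G := {g | ∃ y : G, y⁻¹ * φ y = g} with hS
  set Hs : Set G := {h | φ h = h} with hHs
  set μ : S × Hs → G := fun p => (p.1 : G) * (p.2 : G) with hμ
  -- the basic twisted-fiber computation
  have key : ∀ (h y : G), φ h = h → (h * y)⁻¹ * φ (h * y) = y⁻¹ * φ y := by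
    intro h y hh
    simp only [map_mul, hh, mul_inv_rev]
    group
  -- choose a witness for each element of S
  have hw : ∀ s : S, ∃ y : G, y⁻¹ * φ y = (s : G) := fun s => s.2
  set w : S → G := fun s => (hw s).choose with hwdef
  have hws : ∀ s : S, (w s)⁻¹ * φ (w s) = (s : G) := fun s => (hw s).choose_spec
  -- the bijection (S × Hs) ≃ G
  set m : S × Hs → G := fun p => (p.2 : G) * w p.1 with hm
  have hmval : ∀ p : S × Hs, (m p)⁻¹ * φ (m p) = (p.1 : G) := by
    intro p
    have := key (p.2 : G) (w p.1) p.2.2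
    rw [hm]; simpa [hws p.1] using this
  have minj : Function.Injective m := by
    intro p q hpq
    have h1 : (p.1 : G) = (q.1 : G) := by
      rw [← hmval p, ← hmval q, hpq]
    have h1' : p.1 = q.1 := Subtype.ext h1
    have h2 : (p.2 : G) = (q.2 : G) := by
      have : (p.2 : G) * w p.1 = (q.2 : G) * w q.1 := hpq
      rw [h1'] at this
      exact mul_right_cancel this
    exact Prod.ext h1' (Subtype.ext h2)
  have msurj : Function.Surjective m := by
    intro x
    have hsx : x⁻¹ * φ x ∈ S := ⟨x, rfl⟩
    set s : S := ⟨x⁻¹ * φ x, hsx⟩ with hsdef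
    have hfix : φ (x * (w s)⁻¹) = x * (w s)⁻¹ := by
      have h1 : (w s)⁻¹ * φ (w s) = x⁻¹ * φ x := hws s
      have h2 : φ x * (φ (w s))⁻¹ = x * (w s)⁻¹ := by
        have := h1
        calc φ x * (φ (w s))⁻¹
            = x * ((x⁻¹ * φ x) * ((w s)⁻¹ * φ (w s))⁻¹) * (w s)⁻¹ := by group
          _ = x * (w s)⁻¹ := by rw [← h1]; group
      simpa [map_mul, map_inv] using h2
    refine ⟨⟨s, ⟨x * (w s)⁻¹, hfix⟩⟩, ?_⟩
    show (x * (w s)⁻¹) * w s = x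
    group
  have e : (S × Hs) ≃ G := Equiv.ofBijective m ⟨minj, msurj⟩
  have iff1 : Function.Injective μ ↔ Function.Surjective μ :=
    Finite.injective_iff_surjective_of_equiv e
  constructor
  · -- G = S·H  →  no nontrivial conjugacy
    intro hLHS a ha c hc
    obtain ⟨x, hx⟩ := ha
    have hsurj : Function.Surjective μ := by
      intro x0
      obtain ⟨g, h, hg, hh, hx0⟩ := hLHS x0
      exact ⟨⟨⟨g, hg⟩, ⟨h, hh⟩⟩, hx0.symm⟩
    have hinj : Function.Injective μ := iff1.mpr hsurj
    set b : G := c⁻¹ * a * c with hb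
    have hbH : b ∈ Hs := hc
    have hrS : c⁻¹ * φ c ∈ S := ⟨c, rfl⟩
    have hrbS : (c⁻¹ * φ c) * b ∈ S := by
      refine ⟨x * c * b, ?_⟩
      have hφb : φ b = b := hc
      calc (x * c * b)⁻¹ * φ (x * c * b)
          = b⁻¹ * (c⁻¹ * ((x⁻¹ * φ x) * (φ c * φ b))) := by
            simp only [map_mul, mul_inv_rev]; group
        _ = b⁻¹ * (c⁻¹ * (a * (φ c * b))) := by rw [hx, hφb]
        _ = (c⁻¹ * φ c) * b := by rw [hb]; group
    have h1H : (1 : G) ∈ Hs := by simp [hHs]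
    have hμeq : μ ⟨⟨(c⁻¹ * φ c) * b, hrbS⟩, ⟨1, h1H⟩⟩ = μ ⟨⟨c⁻¹ * φ c, hrS⟩, ⟨b, hbH⟩⟩ := by
      show ((c⁻¹ * φ c) * b) * 1 = (c⁻¹ * φ c) * b
      group
    have := hinj hμeq
    have hb1 : b = 1 := by
      have h2 := congrArg (fun p : S × Hs => ((p.2 : G)) ) this
      simpa using h2.symm
    have : c⁻¹ * a * c = 1 := hb ▸ hb1
    calc a = c * (c⁻¹ * a * c) * c⁻¹ := by group
      _ = 1 := by rw [this]; group
  · -- no nontrivial conjugacy  →  G = S·H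
    intro hRHS
    have hinj : Function.Injective μ := by
      intro p q hpq
      obtain ⟨⟨s, hsS⟩, ⟨h, hhH⟩⟩ := p
      obtain ⟨⟨s', hs'S⟩, ⟨h', hh'H⟩⟩ := q
      obtain ⟨y, hy⟩ := hsS
      obtain ⟨z, hz⟩ := hs'S
      have hprod : s * h = s' * h' := hpq
      have htS : (y * z⁻¹)⁻¹ * φ (y * z⁻¹) ∈ S := ⟨y * z⁻¹, rfl⟩
      set t : G := (y * z⁻¹)⁻¹ * φ (y * z⁻¹) with ht
      have hconj : (φ z)⁻¹ * t * (φ z) = s'⁻¹ * s := by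
        rw [ht, ← hy, ← hz]
        simp only [map_mul, map_inv, mul_inv_rev]
        group
      have hkH : φ (s'⁻¹ * s) = s'⁻¹ * s := by
        have hk : s'⁻¹ * s = h' * h⁻¹ := by
          calc s'⁻¹ * s = s'⁻¹ * (s * h) * h⁻¹ := by group
            _ = s'⁻¹ * (s' * h') * h⁻¹ := by rw [hprod]
            _ = h' * h⁻¹ := by group
        rw [hk]
        have h1 : φ h = h := hhH
        have h2 : φ h' = h' := hh'H
        simp [map_mul, map_inv, h1, h2]
      have ht1 : t = 1 := by
        refine hRHS t htS (φ z) ?_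
        rw [hconj]; exact hkH
      have hss' : s = s' := by
        have : (y * z⁻¹)⁻¹ * φ (y * z⁻¹) = 1 := ht ▸ ht1
        have h3 : φ (y * z⁻¹) = y * z⁻¹ := by
          have := this
          calc φ (y * z⁻¹) = (y * z⁻¹) * ((y * z⁻¹)⁻¹ * φ (y * z⁻¹)) := by group
            _ = (y * z⁻¹) * 1 := by rw [this]
            _ = y * z⁻¹ := by group
        have h4 : φ y * (φ z)⁻¹ = y * z⁻¹ := by simpa [map_mul, map_inv] using h3
        rw [← hy, ← hz]
        calc y⁻¹ * φ y = y⁻¹ * (φ y * (φ z)⁻¹) * φ z := by group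
          _ = y⁻¹ * (y * z⁻¹) * φ z := by rw [h4]
          _ = z⁻¹ * φ z := by group
      have hhh' : h = h' := by
        rw [hss'] at hprod
        exact mul_left_cancel hprod
      simp [hss', hhh']
    have hsurj : Function.Surjective μ := iff1.mp hinj
    intro x
    obtain ⟨⟨⟨g, hg⟩, ⟨h, hh⟩⟩, hgh⟩ := hsurj x
    exact ⟨g, h, hg, hh, hgh.symm⟩
end

section
/- Let G be a finite nilpotent group admitting a coprime automorphism φ. Then every element x ∈ G can be written uniquely in the form x = g·h where g ∈ G_{-φ} and h ∈ G_φ. -/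
open Finset
open scoped IsMulCommutative

universe u

section Hilbert
variable {A : Type*} [CommGroup A]

lemma end_pow_succ_apply {M : Type*} [Monoid M] (ψ : Monoid.End M) (k : ℕ) (a : M) :
    (ψ^(k+1)) a = ψ ((ψ^k) a) := by
  rw [pow_succ']; rfl

lemma end_pow_fix {M : Type*} [Monoid M] (ψ : Monoid.End M) {b : M} (hb : ψ b = b) (k : ℕ) :
    (ψ^k) b = b := by
  induction k with
  | zero => rfl
  | succ k ih => rw [end_pow_succ_apply, ih, hb]

lemma hilb (ψ : Monoid.End A) (n : ℕ) (c : A)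
    (hc : ∏ k ∈ range n, (ψ^k) c = 1) :
    ∃ z, z * (ψ z)⁻¹ = c ^ n := by
  refine ⟨∏ k ∈ range n, ∏ j ∈ range k, (ψ^j) c, ?_⟩
  have hC0 : (ψ^0) c = c := rfl
  have h1 : ψ (∏ k ∈ range n, ∏ j ∈ range k, (ψ^j) c)
      = ∏ k ∈ range n, ((∏ j ∈ range (k+1), (ψ^j) c) * c⁻¹) := by
    rw [map_prod]
    refine Finset.prod_congr rfl fun k _ => ?_
    rw [map_prod]
    have h2 : ∏ j ∈ range k, ψ ((ψ^j) c) = ∏ j ∈ range k, (ψ^(j+1)) c :=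
      Finset.prod_congr rfl fun j _ => (end_pow_succ_apply ψ j c).symm
    rw [h2, eq_mul_inv_iff_mul_eq]
    rw [Finset.prod_range_succ' (fun j => (ψ^j) c) k, hC0]
  have h3 : ∏ k ∈ range n, ((∏ j ∈ range (k+1), (ψ^j) c) * c⁻¹)
      = (∏ k ∈ range n, ∏ j ∈ range (k+1), (ψ^j) c) * (c⁻¹)^n := by
    rw [Finset.prod_mul_distrib, Finset.prod_const, card_range]
  have h4 : ∏ k ∈ range n, ∏ j ∈ range (k+1), (ψ^j) c
      = ∏ k ∈ range n, ∏ j ∈ range k, (ψ^j) c := by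
    have := Finset.prod_range_succ' (fun k => ∏ j ∈ range k, (ψ^j) c) n
    rw [Finset.prod_range_succ, hc] at this
    simpa using this.symm
  rw [h1, h3, h4, mul_inv_rev, inv_pow, inv_inv, mul_comm (c^n) _, mul_inv_cancel_left]

lemma abelian_decomp (ψ : Monoid.End A) (n u : ℕ)
    (hψ : ∀ a : A, (ψ^n) a = a) (hu : ∀ a : A, a ^ (n*u) = a) (a : A) :
    ∃ w e : A, ψ e = e ∧ a = (w⁻¹ * ψ w) * e := by
  set Na := ∏ k ∈ range n, (ψ^k) a with hNa
  have hfix : ψ Na = Na := by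
    rw [hNa, map_prod]
    have h2 : ∏ k ∈ range n, ψ ((ψ^k) a) = ∏ k ∈ range n, (ψ^(k+1)) a :=
      Finset.prod_congr rfl fun j _ => (end_pow_succ_apply ψ j a).symm
    rw [h2]
    have h3 := Finset.prod_range_succ' (fun k => (ψ^k) a) n
    rw [Finset.prod_range_succ, hψ] at h3
    have h4 : (ψ^(0:ℕ)) a = a := rfl
    rw [h4] at h3
    exact mul_right_cancel h3.symm
  have hefix : ψ (Na ^ u) = Na ^ u := by rw [map_pow, hfix]
  have hefixk : ∀ k, (ψ^k) (Na^u) = Na^u := end_pow_fix ψ hefix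
  have hNapow : (Na^u)^n = Na := by
    rw [← pow_mul, mul_comm u n, hu]
  have hnorm : ∏ k ∈ range n, (ψ^k) ((a * (Na^u)⁻¹)^u) = 1 := by
    have h5 : ∀ k ∈ range n, (ψ^k) ((a * (Na^u)⁻¹)^u)
        = ((ψ^k) a * (Na^u)⁻¹)^u := by
      intro k _
      rw [map_pow, map_mul, map_inv, hefixk]
    rw [Finset.prod_congr rfl h5, Finset.prod_pow, Finset.prod_mul_distrib,
      Finset.prod_const, card_range, ← hNa, inv_pow, hNapow, mul_inv_cancel, one_pow]
  obtain ⟨z, hz⟩ := hilb ψ n ((a * (Na^u)⁻¹)^u) hnorm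
  rw [← pow_mul, mul_comm u n, hu] at hz
  refine ⟨z⁻¹, Na^u, hefix, ?_⟩
  rw [inv_inv, map_inv, hz]
  group

end Hilbert

section Restrict
variable {G : Type*} [Group G]

lemma mapsCenter (φ : MulAut G) {g : G} (hg : g ∈ Subgroup.center G) :
    φ g ∈ Subgroup.center G := by
  rw [Subgroup.mem_center_iff] at *
  intro h
  calc h * φ g = φ (φ.symm h * g) := by simp
  _ = φ (g * φ.symm h) := by rw [hg (φ.symm h)]
  _ = φ g * h := by simp

def resEnd (φ : MulAut G) : Monoid.End ↥(Subgroup.center G) where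
  toFun a := ⟨φ a, mapsCenter φ a.2⟩
  map_one' := by ext; simp
  map_mul' a b := by ext; simp

@[simp] lemma resEnd_apply (φ : MulAut G) (a : ↥(Subgroup.center G)) :
    ((resEnd φ a : ↥(Subgroup.center G)) : G) = φ (a : G) := rfl

lemma mulaut_pow_succ_apply (φ : MulAut G) (k : ℕ) (g : G) :
    (φ^(k+1)) g = φ ((φ^k) g) := by
  rw [pow_succ']; rfl

lemma mulaut_pow_succ_apply' (φ : MulAut G) (k : ℕ) (g : G) :
    (φ^(k+1)) g = (φ^k) (φ g) := by
  rw [pow_succ]; rfl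

lemma resEnd_pow (φ : MulAut G) (k : ℕ) (a : ↥(Subgroup.center G)) :
    ((((resEnd φ)^k) a : ↥(Subgroup.center G)) : G) = (φ^k) (a : G) := by
  induction k with
  | zero => rfl
  | succ k ih => rw [end_pow_succ_apply, mulaut_pow_succ_apply, resEnd_apply, ih]

lemma exists_u {G : Type*} [Group G] [Finite G] {n : ℕ}
    (hcop : (Nat.card G).Coprime n) : ∃ u, ∀ g : G, g ^ (n * u) = g := by
  rcases eq_or_ne (Nat.card G) 1 with h1 | h1
  · have : Subsingleton G := (Nat.card_eq_one_iff_unique.mp h1).1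
    exact ⟨0, fun g => Subsingleton.elim _ _⟩
  · have hpos : 0 < Nat.card G := Nat.card_pos
    haveI : NeZero (Nat.card G) := ⟨hpos.ne'⟩
    refine ⟨((n : ZMod (Nat.card G))⁻¹).val, fun g => ?_⟩
    have hmod : n * ((n : ZMod (Nat.card G))⁻¹).val ≡ 1 [MOD Nat.card G] := by
      have h2 : ((n * ((n : ZMod (Nat.card G))⁻¹).val : ℕ) : ZMod (Nat.card G))
          = ((1:ℕ) : ZMod (Nat.card G)) := by
        push_cast
        rw [ZMod.natCast_val, ZMod.cast_id]
        exact ZMod.coe_mul_inv_eq_one n hcop.symm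
      exact (ZMod.natCast_eq_natCast_iff _ _ _).mp h2
    have hmod2 : n * ((n : ZMod (Nat.card G))⁻¹).val ≡ 1 [MOD orderOf g] :=
      Nat.ModEq.of_dvd (orderOf_dvd_natCard g) hmod
    calc g ^ (n * ((n : ZMod (Nat.card G))⁻¹).val) = g ^ 1 := pow_eq_pow_iff_modEq.mpr hmod2
    _ = g := pow_one g

lemma center_h90 (φ : MulAut G) {n u : ℕ}
    (hu : ∀ g : G, g ^ (n * u) = g)
    (cc : ↥(Subgroup.center G))
    (hnorm : ∏ k ∈ range n, ((resEnd φ)^k) cc = 1) :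
    ∃ z ∈ Subgroup.center G, z * (φ z)⁻¹ = (cc : G) := by
  have huA : ∀ a : ↥(Subgroup.center G), a ^ (n*u) = a := by
    intro a; ext; push_cast; exact hu _
  have hnormA : ∏ k ∈ range n, ((resEnd φ)^k) (cc^u) = 1 := by
    calc ∏ k ∈ range n, ((resEnd φ)^k) (cc^u)
        = ∏ k ∈ range n, (((resEnd φ)^k) cc)^u := by
          refine Finset.prod_congr rfl fun k _ => ?_; rw [map_pow]
    _ = (∏ k ∈ range n, ((resEnd φ)^k) cc)^u := Finset.prod_pow _ _ _
    _ = 1 := by rw [hnorm, one_pow]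
  obtain ⟨z, hz⟩ := hilb (resEnd φ) n (cc^u) hnormA
  rw [← pow_mul, mul_comm u n, huA] at hz
  refine ⟨(z : G), z.2, ?_⟩
  have h2 := congrArg (Subtype.val) hz
  simpa using h2

end Restrict

section QuotAut
variable {G : Type*} [Group G]

lemma map_center_eq (φ : MulAut G) :
    Subgroup.map (φ : G →* G) (Subgroup.center G) = Subgroup.center G := by
  apply le_antisymm
  · rintro _ ⟨g, hg, rfl⟩; exact mapsCenter φ hg
  · intro g hg
    exact ⟨φ.symm g, mapsCenter φ.symm hg, φ.apply_symm_apply g⟩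

def quotAut (φ : MulAut G) : MulAut (G ⧸ Subgroup.center G) :=
  QuotientGroup.congr (Subgroup.center G) (Subgroup.center G) φ (map_center_eq φ)

lemma quotAut_mk (φ : MulAut G) (g : G) :
    quotAut φ (QuotientGroup.mk g) = QuotientGroup.mk (φ g) := rfl

lemma quotAut_pow_mk (φ : MulAut G) (k : ℕ) (g : G) :
    ((quotAut φ)^k) (QuotientGroup.mk g) = QuotientGroup.mk ((φ^k) g) := by
  induction k with
  | zero => rfl
  | succ k ih => rw [mulaut_pow_succ_apply, mulaut_pow_succ_apply, ih, quotAut_mk]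

lemma orderOf_quotAut_dvd (φ : MulAut G) : orderOf (quotAut φ) ∣ orderOf φ := by
  apply orderOf_dvd_of_pow_eq_one
  ext q
  induction q using QuotientGroup.induction_on with
  | H g =>
    rw [quotAut_pow_mk, pow_orderOf_eq_one φ]
    rfl

end QuotAut

lemma exists_decomp (cl : ℕ) : ∀ {G : Type u} [Group G] [Finite G] [Group.IsNilpotent G]
    (φ : MulAut G), Group.nilpotencyClass G ≤ cl → (Nat.card G).Coprime (orderOf φ) →
    ∀ x : G, ∃ y h : G, φ h = h ∧ x = (y⁻¹ * φ y) * h := by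
  induction cl with
  | zero =>
    intro G _ _ _ φ hcl _ x
    have hs : Subsingleton G := nilpotencyClass_zero_iff_subsingleton.mp (Nat.le_zero.mp hcl)
    exact ⟨1, 1, Subsingleton.elim _ _, Subsingleton.elim _ _⟩
  | succ cl ih =>
    intro G _ _ _ φ hcl hcop x
    set φ' := quotAut φ with hφ'
    have hclQ : Group.nilpotencyClass (G ⧸ Subgroup.center G) ≤ cl := by
      rw [nilpotencyClass_quotient_center]; omega
    have hcardQ : Nat.card (G ⧸ Subgroup.center G) ∣ Nat.card G :=
      ⟨Nat.card (Subgroup.center G),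
        Subgroup.card_eq_card_quotient_mul_card_subgroup (Subgroup.center G)⟩
    have hcopQ : (Nat.card (G ⧸ Subgroup.center G)).Coprime (orderOf φ') :=
      (Nat.Coprime.coprime_dvd_left hcardQ hcop).coprime_dvd_right (orderOf_quotAut_dvd φ)
    obtain ⟨ybar, hbar, hfixbar, heqbar⟩ := ih φ' hclQ hcopQ (QuotientGroup.mk x)
    obtain ⟨y, rfl⟩ := QuotientGroup.mk_surjective ybar
    obtain ⟨h₀, rfl⟩ := QuotientGroup.mk_surjective hbar
    set n := orderOf φ with hn
    obtain ⟨u, hu⟩ := exists_u hcop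
    -- the center-valued cocycle c = h₀⁻¹ * φ h₀
    have hcZ : h₀⁻¹ * φ h₀ ∈ Subgroup.center G := by
      rw [← QuotientGroup.eq_one_iff]
      have : (QuotientGroup.mk (φ h₀) : G ⧸ Subgroup.center G) = QuotientGroup.mk h₀ := by
        rw [← quotAut_mk, ← hφ', hfixbar]
      calc (QuotientGroup.mk (h₀⁻¹ * φ h₀) : G ⧸ Subgroup.center G)
          = (QuotientGroup.mk h₀ : G ⧸ Subgroup.center G)⁻¹ * QuotientGroup.mk (φ h₀) := by
            rw [QuotientGroup.mk_mul, QuotientGroup.mk_inv]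
      _ = 1 := by rw [this, inv_mul_cancel]
    set cc : ↥(Subgroup.center G) := ⟨h₀⁻¹ * φ h₀, hcZ⟩ with hccdef
    -- partial products
    have key : ∀ m : ℕ,
        ((∏ k ∈ range m, ((resEnd φ)^k) cc : ↥(Subgroup.center G)) : G)
          = h₀⁻¹ * (φ^m) h₀ := by
      intro m
      induction m with
      | zero => simp
      | succ m ihm =>
        rw [Finset.prod_range_succ, Subgroup.coe_mul, ihm, resEnd_pow]
        show h₀⁻¹ * (φ ^ m) h₀ * (φ^m) (h₀⁻¹ * φ h₀) = h₀⁻¹ * (φ^(m+1)) h₀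
        rw [map_mul, map_inv, mulaut_pow_succ_apply' φ m h₀]
        group
    have hnorm : ∏ k ∈ range n, ((resEnd φ)^k) cc = 1 := by
      have h2 := key n
      rw [hn, pow_orderOf_eq_one φ] at h2
      have h3 : ((∏ k ∈ range n, ((resEnd φ)^k) cc : ↥(Subgroup.center G)) : G) = 1 := by
        rw [h2]; show h₀⁻¹ * ((1 : MulAut G) h₀) = 1; simp
      exact_mod_cast Subtype.ext h3
    obtain ⟨z, hzZ, hz⟩ := center_h90 φ hu cc hnorm
    -- h := h₀ * z is a fixed point
    have hfixh : φ (h₀ * z) = h₀ * z := by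
      have hφh₀ : φ h₀ = h₀ * (h₀⁻¹ * φ h₀) := by group
      rw [map_mul, hφh₀]
      have : (h₀⁻¹ * φ h₀ : G) = z * (φ z)⁻¹ := by rw [hz]
      rw [this]
      group
    -- d := ((y⁻¹ φ y) h)⁻¹ x ∈ Z
    have hdZ : ((y⁻¹ * φ y) * (h₀ * z))⁻¹ * x ∈ Subgroup.center G := by
      rw [← QuotientGroup.eq_one_iff]
      have hmkz : (QuotientGroup.mk z : G ⧸ Subgroup.center G) = 1 :=
        QuotientGroup.eq_one_iff z |>.mpr hzZ
      have : (QuotientGroup.mk ((y⁻¹ * φ y) * (h₀ * z)) : G ⧸ Subgroup.center G)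
          = QuotientGroup.mk x := by
        rw [QuotientGroup.mk_mul, QuotientGroup.mk_mul, QuotientGroup.mk_mul, hmkz,
          QuotientGroup.mk_inv, ← quotAut_mk, ← hφ', mul_one, ← heqbar]
      rw [QuotientGroup.mk_mul, QuotientGroup.mk_inv, this, inv_mul_cancel]
    -- decompose d inside the center
    have hψn : ∀ a : ↥(Subgroup.center G), ((resEnd φ)^n) a = a := by
      intro a
      ext
      rw [resEnd_pow, hn, pow_orderOf_eq_one φ]
      rfl
    have huA : ∀ a : ↥(Subgroup.center G), a ^ (n*u) = a := by
      intro a; ext; push_cast; exact hu _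
    obtain ⟨w, e, hfe, hde⟩ := abelian_decomp (resEnd φ) n u hψn huA ⟨_, hdZ⟩
    have hdeG : ((y⁻¹ * φ y) * (h₀ * z))⁻¹ * x = (w : G)⁻¹ * φ (w : G) * (e : G) := by
      have := congrArg (Subtype.val) hde
      simpa using this
    have hfeG : φ (e : G) = (e : G) := by
      have := congrArg (Subtype.val) hfe
      simpa using this
    -- assemble
    refine ⟨y * (w : G), (h₀ * z) * (e : G), ?_, ?_⟩
    · rw [map_mul, hfixh, hfeG]
    · have hwC : ∀ g : G, g * (w : G) = (w : G) * g := fun g =>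
        (Subgroup.mem_center_iff.mp w.2 g)
      have hwC' : ∀ g : G, g * (w : G)⁻¹ = (w : G)⁻¹ * g := fun g =>
        (Subgroup.mem_center_iff.mp (inv_mem w.2) g)
      have hφwC : ∀ g : G, g * φ (w : G) = φ (w : G) * g := fun g =>
        (Subgroup.mem_center_iff.mp (mapsCenter φ w.2) g)
      have hx : x = ((y⁻¹ * φ y) * (h₀ * z)) * ((w : G)⁻¹ * φ (w : G) * (e : G)) := by
        rw [← hdeG]; group
      rw [hx]
      rw [mul_inv_rev, map_mul]
      calc (y⁻¹ * φ y * (h₀ * z)) * ((w:G)⁻¹ * φ (w:G) * (e:G))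
          = y⁻¹ * φ y * ((h₀ * z) * (w:G)⁻¹) * φ (w:G) * (e:G) := by group
      _ = y⁻¹ * φ y * ((w:G)⁻¹ * (h₀ * z)) * φ (w:G) * (e:G) := by rw [hwC' (h₀ * z)]
      _ = y⁻¹ * (φ y * (w:G)⁻¹) * ((h₀ * z) * φ (w:G)) * (e:G) := by group
      _ = y⁻¹ * ((w:G)⁻¹ * φ y) * (φ (w:G) * (h₀ * z)) * (e:G) := by
            rw [hwC' (φ y), hφwC (h₀ * z)]
      _ = (y⁻¹ * (w:G)⁻¹) * (φ y * φ (w:G)) * ((h₀ * z) * (e:G)) := by group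
      _ = ((w:G)⁻¹ * y⁻¹) * (φ y * φ (w:G)) * ((h₀ * z) * (e:G)) := by rw [hwC' y⁻¹]

section Final
variable {G : Type*} [Group G]

def fixedSub (φ : MulAut G) : Subgroup G where
  carrier := {g | φ g = g}
  one_mem' := map_one φ
  mul_mem' := by
    intro a b ha hb
    simp only [Set.mem_setOf_eq] at *
    rw [map_mul, ha, hb]
  inv_mem' := by
    intro a ha
    simp only [Set.mem_setOf_eq] at *
    rw [map_inv, ha]

lemma mem_fixedSub (φ : MulAut G) (g : G) : g ∈ fixedSub φ ↔ φ g = g := Iff.rfl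

noncomputable def quotEquivS (φ : MulAut G) :
    (G ⧸ fixedSub φ) ≃ (Set.range (fun y : G => y⁻¹ * φ y)) := by
  refine Equiv.ofBijective
    (fun q => Quotient.liftOn' q
      (fun g => (⟨g * (φ g)⁻¹, ⟨g⁻¹, by simp⟩⟩ : Set.range (fun y : G => y⁻¹ * φ y)))
      ?_) ⟨?_, ?_⟩
  · intro a b hab
    replace hab : φ (a⁻¹ * b) = a⁻¹ * b := QuotientGroup.leftRel_apply.mp hab
    apply Subtype.ext
    show a * (φ a)⁻¹ = b * (φ b)⁻¹
    rw [map_mul, map_inv] at hab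
    have h2 : (φ a)⁻¹ = a⁻¹ * b * (φ b)⁻¹ := by
      rw [← hab]; group
    rw [h2]; group
  · intro q1 q2
    induction q1 using Quotient.inductionOn' with
    | h a =>
    induction q2 using Quotient.inductionOn' with
    | h b =>
    intro hval
    have hval2 : a * (φ a)⁻¹ = b * (φ b)⁻¹ := congrArg Subtype.val hval
    apply Quotient.sound'
    rw [QuotientGroup.leftRel_apply]
    show φ (a⁻¹ * b) = a⁻¹ * b
    rw [map_mul, map_inv]
    have h2 : (φ a)⁻¹ = a⁻¹ * (b * (φ b)⁻¹) := by rw [← hval2]; group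
    rw [h2]; group
  · rintro ⟨-, y, rfl⟩
    refine ⟨QuotientGroup.mk y⁻¹, ?_⟩
    apply Subtype.ext
    show y⁻¹ * (φ y⁻¹)⁻¹ = y⁻¹ * φ y
    rw [map_inv, inv_inv]

end Final

/-- If `φ` is a coprime automorphism of a finite nilpotent group `G`,
then every `x ∈ G` can be written uniquely as `x = g·h` with `g ∈ G_{-φ}`, `h ∈ G_φ`. -/
theorem stmt_3 {G : Type*} [Group G] [Finite G] [Group.IsNilpotent G] (φ : MulAut G)
    (hcop : (Nat.card G).Coprime (orderOf φ)) :
    ∀ x : G, ∃! gh : G × G,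
      (∃ y : G, y⁻¹ * φ y = gh.1) ∧ φ gh.2 = gh.2 ∧ x = gh.1 * gh.2 := by
  intro x
  classical
  set S := Set.range (fun y : G => y⁻¹ * φ y) with hS
  set H := fixedSub φ with hH
  set m : S × H → G := fun p => (p.1 : G) * (p.2 : G) with hm
  have hsurj : Function.Surjective m := by
    intro g
    obtain ⟨y, h, hfix, heq⟩ := exists_decomp (Group.nilpotencyClass G) φ le_rfl hcop g
    exact ⟨(⟨y⁻¹ * φ y, ⟨y, rfl⟩⟩, ⟨h, hfix⟩), heq.symm⟩
  have hcard : Nat.card (S × H) = Nat.card G := by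
    rw [Nat.card_prod]
    have h1 : Nat.card S = Nat.card (G ⧸ H) := (Nat.card_congr (quotEquivS φ)).symm
    rw [h1, ← Subgroup.card_eq_card_quotient_mul_card_subgroup H]
  have hinj : Function.Injective m := by
    obtain ⟨eqv⟩ := Finite.card_eq.mp hcard
    exact (Finite.injective_iff_surjective_of_equiv eqv).mpr hsurj
  obtain ⟨y, h, hfix, heq⟩ := exists_decomp (Group.nilpotencyClass G) φ le_rfl hcop x
  refine ⟨(y⁻¹ * φ y, h), ⟨⟨y, rfl⟩, hfix, heq⟩, ?_⟩
  rintro ⟨g₂, h₂⟩ ⟨⟨y₂, rfl⟩, hfix₂, heq₂⟩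
  have hmeq : m (⟨⟨y₂⁻¹ * φ y₂, ⟨y₂, rfl⟩⟩, ⟨h₂, hfix₂⟩⟩ : S × H)
      = m (⟨⟨y⁻¹ * φ y, ⟨y, rfl⟩⟩, ⟨h, hfix⟩⟩ : S × H) := by
    show (y₂⁻¹ * φ y₂) * h₂ = (y⁻¹ * φ y) * h
    rw [← heq₂, ← heq]
  have := hinj hmeq
  have h1 : (y₂⁻¹ * φ y₂ : G) = y⁻¹ * φ y := congrArg (fun p => (p.1 : G)) this
  have h2 : (h₂ : G) = h := congrArg (fun p => (p.2 : G)) this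
  exact Prod.ext h1 h2
end

section
/- Let G be a finite nilpotent group admitting a coprime automorphism φ. Then no nontrivial element of G_φ is conjugate in G to an element of G_{-φ}. -/
open Subgroup

private noncomputable def barAut {G : Type*} [Group G] (φ : MulAut G) :
    MulAut (G ⧸ Subgroup.center G) :=
  QuotientGroup.congr (Subgroup.center G) (Subgroup.center G) (φ : G ≃* G)
    (Subgroup.characteristic_iff_map_eq.mp inferInstance (φ : G ≃* G))

private theorem barAut_mk {G : Type*} [Group G] (φ : MulAut G) (x : G) :
    barAut φ (x : G ⧸ Subgroup.center G) = (φ x : G ⧸ Subgroup.center G) := rfl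

private theorem barAut_pow_mk {G : Type*} [Group G] (φ : MulAut G) (k : ℕ) (x : G) :
    (barAut φ ^ k) (x : G ⧸ Subgroup.center G) = ((φ ^ k) x : G ⧸ Subgroup.center G) := by
  induction k with
  | zero => simp
  | succ k ih =>
    rw [pow_succ', pow_succ', MulAut.mul_apply, MulAut.mul_apply, ih, barAut_mk]

private theorem orderOf_barAut_dvd {G : Type*} [Group G] (φ : MulAut G) :
    orderOf (barAut φ) ∣ orderOf φ := by
  apply orderOf_dvd_of_pow_eq_one
  ext q
  induction q using QuotientGroup.induction_on with
  | H x => rw [barAut_pow_mk, pow_orderOf_eq_one]; rfl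

private theorem aux : ∀ (n : ℕ) {G : Type*} [Group G] [Finite G] [Group.IsNilpotent G]
    (φ : MulAut G), Group.nilpotencyClass G ≤ n →
    (Nat.card G).Coprime (orderOf φ) →
    ∀ h : G, φ h = h → ∀ c x : G, c⁻¹ * h * c = x⁻¹ * φ x → h = 1 := by
  intro n
  induction n with
  | zero =>
    intro G _ _ _ φ hcls _ h _ _ _ _
    have : Subsingleton G :=
      nilpotencyClass_zero_iff_subsingleton.mp (Nat.le_zero.mp hcls)
    exact Subsingleton.elim h 1
  | succ n ih =>
    intro G _ _ _ φ hcls hcop h hfix c x hconj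
    -- Step 1: pass to the quotient by the center
    have hQcls : Group.nilpotencyClass (G ⧸ Subgroup.center G) ≤ n := by
      rw [nilpotencyClass_quotient_center]; omega
    have hcop' : (Nat.card (G ⧸ Subgroup.center G)).Coprime (orderOf (barAut φ)) :=
      (Nat.Coprime.coprime_dvd_left ((Subgroup.center G).card_quotient_dvd_card) hcop).coprime_dvd_right
        (orderOf_barAut_dvd φ)
    have hbar : ((h : G ⧸ Subgroup.center G)) = 1 := by
      apply ih (barAut φ) hQcls hcop' (h : G ⧸ Subgroup.center G) _ (c : G ⧸ Subgroup.center G)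
        (x : G ⧸ Subgroup.center G)
      · rw [barAut_mk]
        simp only [← QuotientGroup.mk_inv, ← QuotientGroup.mk_mul]
        exact congrArg _ hconj
      · rw [barAut_mk, hfix]
    have hZ : h ∈ Subgroup.center G := by rwa [QuotientGroup.eq_one_iff] at hbar
    -- Step 2: h is central, so h = x⁻¹ * φ x
    have hc : c⁻¹ * h * c = h := by
      rw [Subgroup.mem_center_iff.mp hZ c⁻¹]
      group
    have h1 : x⁻¹ * φ x = h := by rw [← hconj]; exact hc
    have hxh : φ x = x * h := by rw [← h1]; group
    -- Step 3: φ^k x = x * h^k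
    have hfixk : ∀ k : ℕ, (φ ^ k) h = h := by
      intro k
      induction k with
      | zero => rfl
      | succ k ihk => rw [pow_succ', MulAut.mul_apply, ihk, hfix]
    have hk : ∀ k : ℕ, (φ ^ k) x = x * h ^ k := by
      intro k
      induction k with
      | zero => simp
      | succ k ihk =>
        rw [pow_succ, MulAut.mul_apply, hxh, map_mul, ihk, hfixk, pow_succ, mul_assoc]
    have hpow : h ^ orderOf φ = 1 := by
      have := hk (orderOf φ)
      rw [pow_orderOf_eq_one] at this
      simpa using this.symm
    have hd1 : orderOf h ∣ orderOf φ := orderOf_dvd_of_pow_eq_one hpow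
    have hd2 : orderOf h ∣ Nat.card G := orderOf_dvd_natCard h
    have : orderOf h = 1 := Nat.eq_one_of_dvd_coprimes hcop hd2 hd1
    exact orderOf_eq_one_iff.mp this

/-- If `φ` is a coprime automorphism of a finite nilpotent group `G`,
then no nontrivial element of `G_φ` is conjugate in `G` to an element of `G_{-φ}`. -/
theorem stmt_4 {G : Type*} [Group G] [Finite G] [Group.IsNilpotent G] (φ : MulAut G)
    (hcop : (Nat.card G).Coprime (orderOf φ)) :
    ∀ h : G, φ h = h → ∀ c x : G, c⁻¹ * h * c = x⁻¹ * φ x → h = 1 :=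
  aux (Group.nilpotencyClass G) φ le_rfl hcop
end

section
/- Let K be the field with 5³ = 125 elements, A its additive group, B its multiplicative group, and G = A ⋊ B the natural semidirect product. Let φ be the automorphism of G induced by the Frobenius map x ↦ x⁵ of K (acting on both A and B). Then φ is a coprime automorphism of G of order 3, and G ≠ G_{-φ}·G_φ. -/
noncomputable section

instance : Fact (Nat.Prime 5) := ⟨by norm_num⟩

/-- The field with `5³ = 125` elements. -/
abbrev K : Type := GaloisField 5 3

/-- The homomorphism turning additive automorphisms of `K` into multiplicative
automorphisms of the additive group `A = (K,+)` written multiplicatively. -/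
def addAutToMulAut : Multiplicative (AddAut K) →* MulAut (Multiplicative K) where
  toFun e := AddEquiv.toMultiplicative e
  map_one' := rfl
  map_mul' _ _ := rfl

/-- The action of `B = Kˣ` on `A = (K,+)` by multiplication. -/
def act : Kˣ →* MulAut (Multiplicative K) :=
  addAutToMulAut.comp (DistribMulAction.toAddAut Kˣ K)

/-- The natural semidirect product `G = A ⋊ B`. -/
abbrev GG : Type := Multiplicative K ⋊[act] Kˣ

/-- The Frobenius automorphism `x ↦ x⁵` of `K`. -/
def frob : K ≃+* K := frobeniusEquiv K 5

/-- The automorphism of `G = A ⋊ B` induced by the Frobenius map `x ↦ x⁵` of `K`,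
acting on both `A` and `B`. -/
def Φ : MulAut GG where
  toFun g := ⟨AddEquiv.toMultiplicative frob.toAddEquiv g.left, Units.mapEquiv frob.toMulEquiv g.right⟩
  invFun g := ⟨(AddEquiv.toMultiplicative frob.toAddEquiv).symm g.left,
    (Units.mapEquiv frob.toMulEquiv).symm g.right⟩
  left_inv g := by
    ext
    · exact frob.toAddEquiv.symm_apply_apply g.left
    · exact congrArg Units.val ((Units.mapEquiv frob.toMulEquiv).symm_apply_apply g.right)
  right_inv g := by
    ext
    · exact frob.toAddEquiv.apply_symm_apply g.left
    · exact congrArg Units.val ((Units.mapEquiv frob.toMulEquiv).apply_symm_apply g.right)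
  map_mul' g h := by
    ext
    · show frob (Multiplicative.toAdd g.left + (g.right : K) * Multiplicative.toAdd h.left) =
        frob (Multiplicative.toAdd g.left) +
          frob ((g.right : K)) * frob (Multiplicative.toAdd h.left)
      simp [map_add, map_mul]
    · exact congrArg Units.val (map_mul (Units.mapEquiv frob.toMulEquiv) g.right h.right)

theorem glaub_inj {G : Type*} [Group G] [Finite G] (φ : MulAut G)
    (H : ∀ x : G, ∃ g h : G, (∃ y : G, y⁻¹ * φ y = g) ∧ φ h = h ∧ x = g * h)
    {y z h : G} (hh : φ h = h) (heq : y⁻¹ * φ y = (z⁻¹ * φ z) * h) : h = 1 := by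
  classical
  set f : G → G := fun y => y⁻¹ * φ y with hf
  have key : ∀ y z : G, f y = f z ↔ φ (z * y⁻¹) = z * y⁻¹ := by
    intro y z
    rw [map_mul, map_inv]
    constructor
    · intro h
      simp only [hf] at h
      calc φ z * (φ y)⁻¹ = z * (z⁻¹ * φ z) * (φ y)⁻¹ := by group
        _ = z * (y⁻¹ * φ y) * (φ y)⁻¹ := by rw [← h]
        _ = z * y⁻¹ := by group
    · intro h
      show y⁻¹ * φ y = z⁻¹ * φ z
      calc y⁻¹ * φ y = y⁻¹ * (z⁻¹ * z) * φ y := by group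
        _ = z⁻¹ * (φ z * (φ y)⁻¹) * φ y := by rw [h]; group
        _ = z⁻¹ * φ z := by group
  set S : Set G := {h : G | φ h = h} with hS
  choose σ hσ using fun v : Set.range f => v.2
  have e : G ≃ (Set.range f × S) :=
    { toFun := fun y => (⟨f y, y, rfl⟩, ⟨y * (σ ⟨f y, y, rfl⟩)⁻¹, by
        have h1 : f (σ ⟨f y, y, rfl⟩) = f y := hσ ⟨f y, y, rfl⟩
        exact (key (σ ⟨f y, y, rfl⟩) y).mp h1⟩)
      invFun := fun p => p.2.1 * σ p.1
      left_inv := fun y => by simp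
      right_inv := fun p => by
        obtain ⟨v, s⟩ := p
        have hs : φ s.1 = s.1 := s.2
        have hval : f (s.1 * σ v) = f (σ v) := by
          show (s.1 * σ v)⁻¹ * φ (s.1 * σ v) = _
          rw [map_mul, hs, mul_inv_rev]
          show _ = (σ v)⁻¹ * φ (σ v)
          group
        have hval' : f (s.1 * σ v) = v.1 := hval.trans (hσ v)
        have hsub : (⟨f (s.1 * σ v), s.1 * σ v, rfl⟩ : Set.range f) = v := Subtype.ext hval'
        ext
        · exact congrArg Subtype.val hsub
        · show (s.1 * σ v) * (σ ⟨f (s.1 * σ v), _, rfl⟩)⁻¹ = s.1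
          rw [hsub]; group }
  have hcard : Nat.card (Set.range f × S) = Nat.card G := (Nat.card_congr e).symm
  have hsurj : Function.Surjective (fun p : Set.range f × S => p.1.1 * p.2.1) := by
    intro x
    obtain ⟨g, h, ⟨y, hy⟩, hfix, hx⟩ := H x
    exact ⟨(⟨g, y, hy⟩, ⟨h, hfix⟩), hx.symm⟩
  have hinj : Function.Injective (fun p : Set.range f × S => p.1.1 * p.2.1) :=
    ((Nat.bijective_iff_surjective_and_card _).mpr ⟨hsurj, hcard⟩).1
  have hpair := hinj (a₁ := (⟨f y, y, rfl⟩, ⟨1, map_one φ⟩)) (a₂ := (⟨f z, z, rfl⟩, ⟨h, hh⟩))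
    (by simpa using heq)
  exact (congrArg (fun p : Set.range f × S => p.2.1) hpair).symm

lemma K_card : Nat.card K = 125 := by
  have := GaloisField.card (p := 5) (n := 3) (by norm_num)
  simpa using this

lemma K_pow_card (x : K) : x ^ 125 = x := by
  haveI : Fintype K := Fintype.ofFinite K
  have h : Fintype.card K = 125 := by rw [← Nat.card_eq_fintype_card, K_card]
  have := FiniteField.pow_card x
  rwa [h] at this

lemma exists_nonfix : ∃ a : K, a ^ 5 ≠ a := by
  by_contra hc
  push_neg at hc
  obtain ⟨g, hg⟩ := IsCyclic.exists_generator (α := Kˣ)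
  have hord : orderOf g = Nat.card Kˣ := orderOf_eq_card_of_forall_mem_zpowers hg
  have hg4 : g ^ 4 = 1 := by
    ext
    push_cast
    have h5 : (g : K) ^ 5 = (g : K) := hc _
    have h45 : (g : K) ^ 4 * (g : K) = 1 * (g : K) := by
      rw [one_mul, ← pow_succ]; exact h5
    simpa using mul_right_cancel₀ g.ne_zero h45
  have hdvd : orderOf g ∣ 4 := orderOf_dvd_of_pow_eq_one hg4
  rw [hord, Nat.card_units, K_card] at hdvd
  norm_num at hdvd

lemma toAdd_left_mul (g h : GG) :
    Multiplicative.toAdd (g * h).left =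
      Multiplicative.toAdd g.left + (g.right : K) * Multiplicative.toAdd h.left := rfl

lemma toAdd_left_inv (g : GG) :
    Multiplicative.toAdd (g⁻¹).left = ((g.right⁻¹ : Kˣ) : K) * (- Multiplicative.toAdd g.left) := rfl

lemma toAdd_left_Φ (g : GG) :
    Multiplicative.toAdd (Φ g).left = (Multiplicative.toAdd g.left) ^ 5 := rfl

lemma val_right_Φ (g : GG) : (((Φ g).right : Kˣ) : K) = ((g.right : Kˣ) : K) ^ 5 := rfl

instance : Finite GG :=
  Finite.of_equiv (Multiplicative K × Kˣ)
    ⟨fun p => ⟨p.1, p.2⟩, fun g => (g.left, g.right), fun p => rfl, fun g => rfl⟩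

lemma GG_card : Nat.card GG = 15500 := by
  have e : GG ≃ Multiplicative K × Kˣ :=
    ⟨fun g => (g.left, g.right), fun p => ⟨p.1, p.2⟩, fun g => rfl, fun p => rfl⟩
  rw [Nat.card_congr e, Nat.card_prod, Nat.card_congr (Multiplicative.toAdd (α := K)),
    Nat.card_units, K_card]

/-- Glauberman's example: for `G = A ⋊ B` with `A = (𝔽₁₂₅, +)`,
`B = 𝔽₁₂₅ˣ`, and `φ` induced by the Frobenius `x ↦ x⁵`, the automorphism `φ` is a
coprime automorphism of order `3`, and `G ≠ G_{-φ}·G_φ`. -/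
theorem stmt_5 :
    orderOf Φ = 3 ∧ (Nat.card GG).Coprime (orderOf Φ) ∧
      ¬ (∀ x : GG, ∃ g h : GG, (∃ y : GG, y⁻¹ * Φ y = g) ∧ Φ h = h ∧ x = g * h) := by
  obtain ⟨a, ha⟩ := exists_nonfix
  haveI : Fact (Nat.Prime 3) := ⟨by norm_num⟩
  have hΦ3 : Φ ^ 3 = 1 := by
    apply DFunLike.ext
    intro g
    show (Φ ^ 3) g = g
    rw [pow_succ, pow_succ, pow_one, MulAut.mul_apply, MulAut.mul_apply]
    ext
    · show (((Multiplicative.toAdd g.left) ^ 5) ^ 5) ^ 5 = Multiplicative.toAdd g.left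
      rw [← pow_mul, ← pow_mul]
      exact K_pow_card _
    · show (((g.right : K) ^ 5) ^ 5) ^ 5 = (g.right : K)
      rw [← pow_mul, ← pow_mul]
      exact K_pow_card _
  have hΦne : Φ ≠ 1 := by
    intro hcon
    exact ha (congrArg (fun ψ : MulAut GG =>
      Multiplicative.toAdd ((ψ ⟨Multiplicative.ofAdd a, 1⟩).left)) hcon)
  have hord : orderOf Φ = 3 := orderOf_eq_prime hΦ3 hΦne
  refine ⟨hord, ?_, ?_⟩
  · rw [hord, GG_card]
    decide
  · intro H
    set u : K := a ^ 5 - a with hu_def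
    have hu : u ≠ 0 := sub_ne_zero.mpr ha
    set bK : K := u ^ 25 with hbK_def
    have hbne : bK ≠ 0 := pow_ne_zero _ hu
    have hb5 : bK ^ 5 = u := by rw [hbK_def, ← pow_mul]; exact K_pow_card u
    set b : Kˣ := Units.mk0 bK hbne with hb_def
    set y1 : GG := ⟨Multiplicative.ofAdd a, b⟩ with hy1
    set y2 : GG := ⟨Multiplicative.ofAdd 0, b⟩ with hy2
    set hh : GG := ⟨Multiplicative.ofAdd 1, 1⟩ with hhh
    have hfix : Φ hh = hh := by
      ext
      · show (1 : K) ^ 5 = 1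
        rw [one_pow]
      · show ((1 : Kˣ) : K) ^ 5 = ((1 : Kˣ) : K)
        rw [Units.val_one, one_pow]
    have heq : y1⁻¹ * Φ y1 = (y2⁻¹ * Φ y2) * hh := by
      ext
      · show Multiplicative.toAdd (y1⁻¹ * Φ y1).left = Multiplicative.toAdd ((y2⁻¹ * Φ y2) * hh).left
        rw [toAdd_left_mul, toAdd_left_mul, toAdd_left_mul, toAdd_left_inv, toAdd_left_inv,
          toAdd_left_Φ, toAdd_left_Φ]
        show (bK⁻¹) * (-a) + bK⁻¹ * a ^ 5 =
          (bK⁻¹ * (-(0:K)) + bK⁻¹ * (0:K) ^ 5) + (bK⁻¹ * bK ^ 5) * (1:K)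
        rw [hb5]
        field_simp
        ring
      · show ((y1⁻¹ * Φ y1).right : K) = (((y2⁻¹ * Φ y2) * hh).right : K)
        show (bK⁻¹) * bK ^ 5 = (bK⁻¹ * bK ^ 5) * ((1:Kˣ) : K)
        rw [Units.val_one, mul_one]
    have h1 : hh = 1 := glaub_inj Φ H hfix heq
    have : (1 : K) = 0 := congrArg (fun g : GG => Multiplicative.toAdd g.left) h1
    exact one_ne_zero this

end
end

section
/- Let G be a finite soluble group of derived length d = 2 (metabelian), φ a coprime automorphism of G with G = [G,φ] and x^e = 1 for every x ∈ G_{-φ}. Let M = G' be the derived subgroup. Then M^e ≤ Z(G). -/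
/-- Let `G` be a finite metabelian group with a coprime automorphism `φ`
such that `G = [G,φ]` and `x^e = 1` for every `x ∈ G_{-φ}`. Then `(G')^e ≤ Z(G)`. -/
theorem stmt_7 {G : Type*} [Group G] [Finite G] (φ : MulAut G) (e : ℕ)
    (hcop : (Nat.card G).Coprime (orderOf φ))
    (hmeta : derivedSeries G 2 = ⊥)
    (hgen : Subgroup.closure (Set.range fun x : G => x⁻¹ * φ x) = ⊤)
    (hexp : ∀ x : G, (x⁻¹ * φ x) ^ e = 1) :
    ∀ m ∈ commutator G, m ^ e ∈ Subgroup.center G := by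
  -- commutator subgroup is abelian
  have hab : ∀ a ∈ commutator G, ∀ b ∈ commutator G, a * b = b * a := by
    intro a ha b hb
    open scoped commutatorElement in
    have h2 : ⁅a, b⁆ ∈ derivedSeries G 2 := by
      rw [show (2:ℕ) = 1 + 1 from rfl, derivedSeries_succ]
      exact Subgroup.commutator_mem_commutator
        (by rwa [derivedSeries_one]) (by rwa [derivedSeries_one])
    rw [hmeta, Subgroup.mem_bot] at h2
    exact commutatorElement_eq_one_iff_mul_comm.mp h2
  -- commutator subgroup is characteristic
  have hchar : ∀ x ∈ commutator G, φ x ∈ commutator G := by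
    intro x hx
    have hmap : (commutator G).map φ.toMonoidHom = commutator G := by
      rw [commutator_def, Subgroup.map_commutator,
        Subgroup.map_top_of_surjective _ φ.surjective]
    rw [← hmap]
    exact Subgroup.mem_map_of_mem _ hx
  -- φ fixes e-th powers of commutator elements
  have hfix : ∀ m ∈ commutator G, φ (m ^ e) = m ^ e := by
    intro m hm
    have hc : m⁻¹ * φ m ∈ commutator G :=
      mul_mem (inv_mem hm) (hchar m hm)
    have hcomm : Commute m (m⁻¹ * φ m) := hab m hm _ hc
    have hφm : φ m = m * (m⁻¹ * φ m) := by group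
    calc φ (m ^ e) = (φ m) ^ e := map_pow φ m e
    _ = (m * (m⁻¹ * φ m)) ^ e := by rw [← hφm]
    _ = m ^ e * (m⁻¹ * φ m) ^ e := hcomm.mul_pow e
    _ = m ^ e := by rw [hexp m, mul_one]
  intro m hm
  -- each generator commutes with m ^ e
  have key : ∀ x : G, (x⁻¹ * φ x) * m ^ e = m ^ e * (x⁻¹ * φ x) := by
    intro x
    have hm' : x * m * x⁻¹ ∈ commutator G :=
      (Subgroup.commutator_normal ⊤ ⊤).conj_mem m hm x
    have h1 : φ ((x * m * x⁻¹) ^ e) = (x * m * x⁻¹) ^ e := hfix _ hm'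
    have h2 : x⁻¹ * (x * m * x⁻¹) ^ e * x = m ^ e := by
      rw [conj_pow]; group
    have h3 : (φ x)⁻¹ * (x * m * x⁻¹) ^ e * φ x = m ^ e := by
      have := congrArg φ h2
      rw [map_mul, map_mul, map_inv, h1, hfix m hm] at this
      exact this
    calc (x⁻¹ * φ x) * m ^ e
        = x⁻¹ * ((φ x) * ((φ x)⁻¹ * (x * m * x⁻¹) ^ e * φ x)) := by rw [h3]; group
      _ = x⁻¹ * (x * m * x⁻¹) ^ e * φ x := by group
      _ = m ^ e * (x⁻¹ * φ x) := by rw [← h2]; group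
  -- conclude by closure induction
  rw [Subgroup.mem_center_iff]
  intro g
  have hg : g ∈ Subgroup.closure (Set.range fun x : G => x⁻¹ * φ x) := by
    rw [hgen]; trivial
  refine Subgroup.closure_induction ?_ ?_ ?_ ?_ hg
  · rintro y ⟨x, rfl⟩
    exact key x
  · simp
  · intro a b _ _ ha hb
    rw [mul_assoc, hb, ← mul_assoc, ha, mul_assoc]
  · intro a _ ha
    have : Commute a (m ^ e) := ha
    exact this.inv_left
end

section
/- Let G be a finite nilpotent group admitting a coprime automorphism φ with G = [G,φ]. Let S be the set of those elements h ∈ G_φ for which there exist x₁, x₂ ∈ G_{-φ} such that h lies in the minimal φ-invariant subgroup containing x₁ and x₂. Then G_φ = ⟨S⟩. -/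
open Subgroup QuotientGroup

theorem lemA {m : ℕ} (G : Type*) [Group G] [Group.IsNilpotent G] :
    ∀ (_ : Finite G) (φ : MulAut G), φ ^ m = 1 → (Nat.card G).Coprime m →
    ∀ f y₁ y₂ : G, φ f = f → y₁⁻¹ * φ y₁ = (y₂⁻¹ * φ y₂) * f → f = 1 := by
  refine nilpotent_center_quotient_ind
    (P := fun G _ _ => ∀ (_ : Finite G) (φ : MulAut G), φ ^ m = 1 → (Nat.card G).Coprime m →
      ∀ f y₁ y₂ : G, φ f = f → y₁⁻¹ * φ y₁ = (y₂⁻¹ * φ y₂) * f → f = 1) G ?_ ?_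
  · intro G _ _ _ φ _ _ f _ _ _ _; exact Subsingleton.elim f 1
  · intro G _ _ ih hFin φ hm hcop f y₁ y₂ hf heq
    have he : (Subgroup.center G).map (φ : G ≃* G) = Subgroup.center G :=
      Subgroup.characteristic_iff_map_eq.mp Subgroup.centerCharacteristic (φ : G ≃* G)
    set φQ : MulAut (G ⧸ Subgroup.center G) := QuotientGroup.congr _ _ (φ : G ≃* G) he with hφQ
    have hact : ∀ (k : ℕ) (x : G), (φQ ^ k) (QuotientGroup.mk x) = QuotientGroup.mk ((φ ^ k) x) := by
      intro k
      induction k with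
      | zero => intro x; simp
      | succ k ihk =>
        intro x
        rw [pow_succ, pow_succ, MulAut.mul_apply, MulAut.mul_apply]
        have : φQ (QuotientGroup.mk x) = QuotientGroup.mk (φ x) :=
          QuotientGroup.congr_mk _ _ _ _ _
        rw [this, ihk]
    have hmQ : φQ ^ m = 1 := by
      ext q
      induction q using QuotientGroup.induction_on with
      | _ x => rw [hact m x, hm]; rfl
    have hcopQ : (Nat.card (G ⧸ Subgroup.center G)).Coprime m :=
      Nat.Coprime.coprime_dvd_left (Subgroup.card_quotient_dvd_card _) hcop
    have hcent : f ∈ Subgroup.center G := by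
      have := ih inferInstance φQ hmQ hcopQ (QuotientGroup.mk f) (QuotientGroup.mk y₁)
        (QuotientGroup.mk y₂) ?_ ?_
      · rwa [← QuotientGroup.eq_one_iff f]
      · have := hact 1 f; simpa [hf] using this
      · have h1 := hact 1 y₁
        have h2 := hact 1 y₂
        simp only [pow_one] at h1 h2
        rw [← QuotientGroup.mk_inv, ← QuotientGroup.mk_inv, h1, h2, ← QuotientGroup.mk_mul,
          ← QuotientGroup.mk_mul, ← QuotientGroup.mk_mul, heq]
    -- now the key computation: φ (y₁ * y₂⁻¹) = (y₁ * y₂⁻¹) * f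
    set s := y₁ * y₂⁻¹ with hs
    have hkey : φ s = s * f := by
      have h1 : φ y₁ = y₁ * (y₂⁻¹ * φ y₂ * f) := by
        rw [← heq]; group
      rw [hs, map_mul, map_inv, h1]
      have hc := (Subgroup.mem_center_iff.mp hcent (φ y₂))
      group
      rw [mul_assoc, mul_assoc, ← mul_assoc (φ y₂), hc]
      group
    have hfk : ∀ k : ℕ, (φ ^ k) f = f := by
      intro k
      induction k with
      | zero => simp
      | succ k ihk => rw [pow_succ, MulAut.mul_apply, hf, ihk]
    have hpows : ∀ k : ℕ, (φ ^ k) s = s * f ^ k := by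
      intro k
      induction k with
      | zero => simp
      | succ k ihk =>
        rw [pow_succ, MulAut.mul_apply, hkey, map_mul, ihk, hfk, pow_succ, mul_assoc]
    have hfm : f ^ m = 1 := by
      have := hpows m
      rw [hm] at this
      have : s = s * f ^ m := this
      exact (mul_eq_left.mp this.symm)
    have : orderOf f ∣ Nat.gcd (Nat.card G) m :=
      Nat.dvd_gcd (orderOf_dvd_natCard f) (orderOf_dvd_of_pow_eq_one hfm)
    rw [hcop] at this
    exact orderOf_eq_one_iff.mp (Nat.eq_one_of_dvd_one this)

/-- The subgroup of fixed points of an automorphism. -/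
def fixedSubgroup {G : Type*} [Group G] (φ : MulAut G) : Subgroup G where
  carrier := {x | φ x = x}
  one_mem' := map_one φ
  mul_mem' := by
    intro a b ha hb
    simp only [Set.mem_setOf_eq] at *
    rw [map_mul, ha, hb]
  inv_mem' := by
    intro a ha
    simp only [Set.mem_setOf_eq] at *
    rw [map_inv, ha]

theorem lemC {G : Type*} [Group G] [Finite G] [Group.IsNilpotent G] {m : ℕ} (φ : MulAut G)
    (hm : φ ^ m = 1) (hcop : (Nat.card G).Coprime m) (g : G) :
    ∃ y h : G, φ h = h ∧ g = (y⁻¹ * φ y) * h := by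
  set H : Subgroup G := fixedSubgroup φ with hH
  have hwd : ∀ z₁ z₂ : G, @Setoid.r G (QuotientGroup.leftRel H) z₁ z₂ →
      z₁ * (φ z₁)⁻¹ = z₂ * (φ z₂)⁻¹ := by
    intro z₁ z₂ hr
    have ha' : z₁⁻¹ * z₂ ∈ H := QuotientGroup.leftRel_apply.mp hr
    have ha : φ (z₁⁻¹ * z₂) = z₁⁻¹ * z₂ := ha'
    have : φ z₂ = φ z₁ * (z₁⁻¹ * z₂) := by
      rw [← ha, map_mul, map_inv]; group
    rw [this]; group
  set F : (G ⧸ H) × H → G := fun p => Quotient.liftOn' p.1 (fun z => z * (φ z)⁻¹) hwd * (p.2 : G)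
    with hF
  have hFmk : ∀ (z : G) (h : H), F (QuotientGroup.mk z, h) = z * (φ z)⁻¹ * (h : G) := by
    intro z h; rfl
  have hinj : Function.Injective F := by
    rintro ⟨q₁, h₁⟩ ⟨q₂, h₂⟩ hpe
    induction q₁ using Quotient.inductionOn' with
    | h z₁ =>
    induction q₂ using Quotient.inductionOn' with
    | h z₂ =>
    have hpe' : z₁ * (φ z₁)⁻¹ * (h₁ : G) = z₂ * (φ z₂)⁻¹ * (h₂ : G) := hpe
    have hfeq : z₁⁻¹⁻¹ * φ z₁⁻¹ = (z₂⁻¹⁻¹ * φ z₂⁻¹) * ((h₂ : G) * (h₁ : G)⁻¹) := by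
      rw [map_inv, map_inv, inv_inv, inv_inv]
      have := congrArg (· * (h₁ : G)⁻¹) hpe'
      simp only [mul_assoc, mul_inv_cancel, mul_one] at this
      simpa [mul_assoc] using this
    have hffix : φ ((h₂ : G) * (h₁ : G)⁻¹) = (h₂ : G) * (h₁ : G)⁻¹ := by
      have := (mul_mem h₂.2 (inv_mem h₁.2) : ((h₂ : G) * (h₁ : G)⁻¹) ∈ H)
      exact this
    have hf1 := lemA G inferInstance φ hm hcop _ _ _ hffix hfeq
    have hh : h₁ = h₂ := by
      have : (h₂ : G) = (h₁ : G) := by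
        have := mul_inv_eq_one.mp hf1; exact (mul_inv_eq_one.mp hf1)
      exact (Subtype.ext this.symm)
    subst hh
    have hz : z₁ * (φ z₁)⁻¹ = z₂ * (φ z₂)⁻¹ := by
      exact mul_right_cancel hpe'
    have hrel : φ (z₁⁻¹ * z₂) = z₁⁻¹ * z₂ := by
      rw [map_mul, map_inv]
      have : (φ z₁)⁻¹ = z₁⁻¹ * (z₂ * (φ z₂)⁻¹) := by rw [← hz]; group
      rw [this]; group
    have : (QuotientGroup.mk z₁ : G ⧸ H) = QuotientGroup.mk z₂ :=
      Quotient.sound' (QuotientGroup.leftRel_apply.mpr hrel)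
    exact Prod.ext this rfl
  have hcard : Nat.card ((G ⧸ H) × H) = Nat.card G := by
    rw [Nat.card_prod, ← Subgroup.card_eq_card_quotient_mul_card_subgroup]
  have hsurj : Function.Surjective F :=
    ((Nat.bijective_iff_injective_and_card F).mpr ⟨hinj, hcard⟩).surjective
  obtain ⟨⟨q, h⟩, hq⟩ := hsurj g
  revert hq
  induction q using Quotient.inductionOn' with
  | h z =>
  intro hq
  refine ⟨z⁻¹, (h : G), h.2, ?_⟩
  rw [← hq, hFmk, inv_inv, map_inv]

theorem lemC_sub {G : Type*} [Group G] [Finite G] [Group.IsNilpotent G] {m : ℕ} (φ : MulAut G)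
    (hm : φ ^ m = 1) (hcop : (Nat.card G).Coprime m) (K : Subgroup G)
    (hK : ∀ x ∈ K, φ x ∈ K) (g : G) (hg : g ∈ K) :
    ∃ y h : G, y ∈ K ∧ h ∈ K ∧ φ h = h ∧ g = (y⁻¹ * φ y) * h := by
  set f : ↥K →* ↥K := (φ.toMonoidHom.comp K.subtype).codRestrict K
    (fun x => hK x x.2) with hf
  have hfc : ∀ x : K, (f x : G) = φ (x : G) := fun x => rfl
  have hbij : Function.Bijective f := by
    rw [← Finite.injective_iff_bijective]
    intro a b hab
    have : φ (a : G) = φ (b : G) := by rw [← hfc, ← hfc, hab]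
    exact Subtype.ext (φ.injective this)
  set e : MulAut ↥K := MulEquiv.ofBijective f hbij with he
  have hec : ∀ x : K, (e x : G) = φ (x : G) := fun x => rfl
  have hepow : ∀ (k : ℕ) (x : K), ((e ^ k) x : G) = (φ ^ k) (x : G) := by
    intro k
    induction k with
    | zero => intro x; simp
    | succ k ihk =>
      intro x
      rw [pow_succ, pow_succ, MulAut.mul_apply, MulAut.mul_apply, ihk]
      congr 1
  have hem : e ^ m = 1 := by
    ext x
    have := hepow m x
    rw [hm] at this
    exact this
  have hcopK : (Nat.card ↥K).Coprime m :=
    Nat.Coprime.coprime_dvd_left (Subgroup.card_subgroup_dvd_card K) hcop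
  obtain ⟨y, h, hh, hdec⟩ := lemC e hem hcopK (⟨g, hg⟩ : K)
  refine ⟨(y : G), (h : G), y.2, h.2, ?_, ?_⟩
  · have := congrArg (Subtype.val) hh
    rwa [hec] at this
  · have := congrArg (Subtype.val) hdec
    simpa [hec] using this

/-- Minimal `φ`-invariant subgroup containing a set. -/
def invClosure {G : Type*} [Group G] (φ : MulAut G) (s : Set G) : Subgroup G :=
  Subgroup.closure {x | ∃ (k : ℕ), ∃ a ∈ s, (φ ^ k) a = x}

theorem subset_invClosure {G : Type*} [Group G] (φ : MulAut G) (s : Set G) :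
    s ⊆ invClosure φ s := fun a ha =>
  Subgroup.subset_closure ⟨0, a, ha, by simp⟩

theorem invClosure_inv {G : Type*} [Group G] (φ : MulAut G) (s : Set G) :
    ∀ x ∈ invClosure φ s, φ x ∈ invClosure φ s := by
  intro x hx
  induction hx using Subgroup.closure_induction with
  | mem x hx =>
    obtain ⟨k, a, ha, rfl⟩ := hx
    exact Subgroup.subset_closure ⟨k + 1, a, ha, by rw [pow_succ', MulAut.mul_apply]⟩
  | one => simpa using (invClosure φ s).one_mem
  | mul x y _ _ hx hy => rw [map_mul]; exact mul_mem hx hy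
  | inv x _ hx => rw [map_inv]; exact inv_mem hx

theorem invClosure_le {G : Type*} [Group G] (φ : MulAut G) (s : Set G) (K : Subgroup G)
    (hs : s ⊆ K) (hK : ∀ z ∈ K, φ z ∈ K) : invClosure φ s ≤ K := by
  apply Subgroup.closure_le K |>.mpr
  rintro x ⟨k, a, ha, rfl⟩
  induction k with
  | zero => simpa using hs ha
  | succ k ihk =>
    rw [pow_succ', MulAut.mul_apply]
    exact hK _ ihk

def Sset {G : Type*} [Group G] (φ : MulAut G) : Set G :=
  {h : G | φ h = h ∧ ∃ x₁ x₂ : G,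
      (∃ y : G, y⁻¹ * φ y = x₁) ∧ (∃ y : G, y⁻¹ * φ y = x₂) ∧
      h ∈ ⨅ (K : Subgroup G) (_ : x₁ ∈ K) (_ : x₂ ∈ K) (_ : ∀ z ∈ K, φ z ∈ K), K}

theorem conj_list_prod {G : Type*} [Group G] (h : G) (t : List G) :
    (t.map fun c => h * c * h⁻¹).prod = h * t.prod * h⁻¹ := by
  induction t with
  | nil => simp
  | cons c t iht =>
    simp only [List.map_cons, List.prod_cons, iht]
    group

theorem main_ind {G : Type*} [Group G] [Finite G] [Group.IsNilpotent G] {m : ℕ} (φ : MulAut G)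
    (hm : φ ^ m = 1) (hcop : (Nat.card G).Coprime m) :
    ∀ (n : ℕ) (l : List G), l.length ≤ n →
      (∀ x ∈ l, (∃ y : G, y⁻¹ * φ y = x) ∨ (∃ y : G, y⁻¹ * φ y = x⁻¹)) →
      φ l.prod = l.prod → l.prod ∈ Subgroup.closure (Sset φ) := by
  have key : ∀ c : G, ((∃ y : G, y⁻¹ * φ y = c) ∨ (∃ y : G, y⁻¹ * φ y = c⁻¹)) →
      ∃ x : G, (∃ y : G, y⁻¹ * φ y = x) ∧ ∀ K' : Subgroup G, x ∈ K' → c ∈ K' := by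
    rintro c (⟨y, hy⟩ | ⟨y, hy⟩)
    · exact ⟨c, ⟨y, hy⟩, fun _ hc => hc⟩
    · exact ⟨c⁻¹, ⟨y, hy⟩, fun K' hc => by simpa using inv_mem hc⟩
  intro n
  induction n with
  | zero =>
    intro l hl _ _
    have : l = [] := List.eq_nil_of_length_eq_zero (Nat.le_zero.mp hl)
    rw [this, List.prod_nil]
    exact one_mem _
  | succ n ih =>
    intro l hl hmem hfix
    match l with
    | [] =>
      rw [List.prod_nil]
      exact one_mem _
    | [a] =>
      simp only [List.prod_cons, List.prod_nil, mul_one] at hfix ⊢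
      apply Subgroup.subset_closure
      obtain ⟨x, hx, hxK⟩ := key a (hmem a (by simp))
      refine ⟨hfix, x, x, hx, hx, ?_⟩
      simp only [Subgroup.mem_iInf]
      intro K h1 _ _
      exact hxK K h1
    | a :: b :: t =>
      set K : Subgroup G := invClosure φ {a, b} with hK
      have haK : a ∈ K := subset_invClosure φ _ (by simp)
      have hbK : b ∈ K := subset_invClosure φ _ (by simp)
      obtain ⟨y, h, hyK, hhK, hhfix, hdec⟩ :=
        lemC_sub φ hm hcop K (invClosure_inv φ _) (a * b) (mul_mem haK hbK)
      have hhS : h ∈ Sset φ := by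
        obtain ⟨x₁, hx₁, hx₁K⟩ := key a (hmem a (by simp))
        obtain ⟨x₂, hx₂, hx₂K⟩ := key b (hmem b (by simp))
        refine ⟨hhfix, x₁, x₂, hx₁, hx₂, ?_⟩
        simp only [Subgroup.mem_iInf]
        intro K' h1 h2 hinv
        refine invClosure_le φ {a, b} K' ?_ hinv hhK
        intro c hc
        rcases hc with rfl | rfl
        · exact hx₁K K' h1
        · exact hx₂K K' h2
      set l' : List G := (y⁻¹ * φ y) :: t.map (fun c => h * c * h⁻¹) with hl'
      have hl'prod : l'.prod = (a :: b :: t).prod * h⁻¹ := by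
        simp only [hl', List.prod_cons, conj_list_prod]
        rw [← mul_assoc, ← mul_assoc, ← hdec]
        group
      have hl'mem : ∀ x ∈ l', (∃ y : G, y⁻¹ * φ y = x) ∨ (∃ y : G, y⁻¹ * φ y = x⁻¹) := by
        intro x hx
        rcases List.mem_cons.mp hx with rfl | hx
        · exact Or.inl ⟨y, rfl⟩
        · obtain ⟨c, hc, rfl⟩ := List.mem_map.mp hx
          rcases hmem c (by simp [hc]) with ⟨y', hy'⟩ | ⟨y', hy'⟩
          · refine Or.inl ⟨y' * h⁻¹, ?_⟩
            rw [mul_inv_rev, map_mul, map_inv, hhfix, inv_inv, ← hy']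
            group
          · refine Or.inr ⟨y' * h⁻¹, ?_⟩
            have h2 : (h * c * h⁻¹)⁻¹ = h * c⁻¹ * h⁻¹ := by group
            rw [h2, ← hy', mul_inv_rev, map_mul, map_inv, hhfix, inv_inv]
            group
      have hl'fix : φ l'.prod = l'.prod := by
        rw [hl'prod, map_mul, map_inv, hhfix, hfix]
      have hl'len : l'.length ≤ n := by
        simp only [hl', List.length_cons, List.length_map]
        have : (a :: b :: t).length ≤ n + 1 := hl
        simp only [List.length_cons] at this
        omega
      have hmem1 : l'.prod ∈ Subgroup.closure (Sset φ) := ih l' hl'len hl'mem hl'fix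
      have : (a :: b :: t).prod = l'.prod * h := by rw [hl'prod]; group
      rw [this]
      exact mul_mem hmem1 (Subgroup.subset_closure hhS)

/-- Let `G` be a finite nilpotent group with a coprime automorphism `φ` and
`G = [G,φ]`. Let `S` be the set of `h ∈ G_φ` lying in the minimal `φ`-invariant subgroup
containing two elements `x₁, x₂ ∈ G_{-φ}`. Then `G_φ = ⟨S⟩`. -/
theorem stmt_8 {G : Type*} [Group G] [Finite G] [Group.IsNilpotent G] (φ : MulAut G)
    (hcop : (Nat.card G).Coprime (orderOf φ))
    (hgen : Subgroup.closure (Set.range fun x : G => x⁻¹ * φ x) = ⊤) :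
    (Subgroup.closure {h : G | φ h = h ∧ ∃ x₁ x₂ : G,
        (∃ y : G, y⁻¹ * φ y = x₁) ∧ (∃ y : G, y⁻¹ * φ y = x₂) ∧
        h ∈ ⨅ (K : Subgroup G) (_ : x₁ ∈ K) (_ : x₂ ∈ K) (_ : ∀ z ∈ K, φ z ∈ K), K} : Set G)
      = {x : G | φ x = x} := by
  have hSset : {h : G | φ h = h ∧ ∃ x₁ x₂ : G,
        (∃ y : G, y⁻¹ * φ y = x₁) ∧ (∃ y : G, y⁻¹ * φ y = x₂) ∧
        h ∈ ⨅ (K : Subgroup G) (_ : x₁ ∈ K) (_ : x₂ ∈ K) (_ : ∀ z ∈ K, φ z ∈ K), K} = Sset φ :=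
    rfl
  rw [hSset]
  apply Set.Subset.antisymm
  · intro x hx
    have hle : Subgroup.closure (Sset φ) ≤ fixedSubgroup φ :=
      (Subgroup.closure_le _).mpr (fun h hh => hh.1)
    exact hle hx
  · intro g hg
    have hgfix : φ g = g := hg
    set D : Set G := Set.range fun x : G => x⁻¹ * φ x with hD
    have hgD : g ∈ Submonoid.closure (D ∪ D⁻¹) := by
      rw [← Subgroup.closure_toSubmonoid, hgen]
      trivial
    obtain ⟨l, hlmem, hlprod⟩ := Submonoid.exists_list_of_mem_closure hgD
    have := main_ind φ (pow_orderOf_eq_one φ) hcop l.length l le_rfl ?_ (by rw [hlprod]; exact hgfix)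
    · rw [hlprod] at this; exact this
    · intro x hx
      rcases hlmem x hx with hx' | hx'
      · exact Or.inl hx'
      · exact Or.inr (Set.mem_inv.mp hx')
end

section
/- Let G be a finite nilpotent group of class c generated by a set of elements each of order dividing e. Then the exponent of G divides e^c. -/
open Subgroup
open scoped commutatorElement
open scoped IsMulCommutative

/-- Elements of a central closure generated by elements of order dividing `e`
have order dividing `e`. -/
lemma central_closure_pow {G : Type*} [Group G] {S : Set G}
    (hS : Subgroup.closure S ≤ Subgroup.center G) (e : ℕ)
    (hSe : ∀ s ∈ S, s ^ e = 1) : ∀ n ∈ Subgroup.closure S, n ^ e = 1 := by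
  intro n hn
  induction hn using Subgroup.closure_induction with
  | mem x hx => exact hSe x hx
  | one => exact one_pow e
  | mul x y hx hy ihx ihy =>
      have hc : Commute x y := ((Subgroup.mem_center_iff.mp (hS hx)) y).symm
      rw [hc.mul_pow, ihx, ihy, mul_one]
  | inv x hx ihx => rw [inv_pow, ihx, inv_one]

/-- The lower central series maps onto the lower central series under a surjective hom. -/
lemma lcs_map_surjective {G H : Type*} [Group G] [Group H] (f : G →* H)
    (hf : Function.Surjective f) :
    ∀ n, (Subgroup.lowerCentralSeries (⊤ : Subgroup G) n).map f = Subgroup.lowerCentralSeries (⊤ : Subgroup H) n := by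
  intro n
  induction n with
  | zero =>
      simp only [Subgroup.lowerCentralSeries_zero]
      rw [← MonoidHom.range_eq_map, MonoidHom.range_eq_top_of_surjective f hf]
  | succ n ih =>
      show Subgroup.map f ⁅Subgroup.lowerCentralSeries (⊤ : Subgroup G) n, ⊤⁆ = ⁅Subgroup.lowerCentralSeries (⊤ : Subgroup H) n, ⊤⁆
      rw [Subgroup.map_commutator, ih, ← MonoidHom.range_eq_map,
        MonoidHom.range_eq_top_of_surjective f hf]

lemma aux_pow : ∀ (c : ℕ) {G : Type*} [Group G],
    Subgroup.lowerCentralSeries (⊤ : Subgroup G) c = ⊥ → ∀ (e : ℕ) (X : Set G), Subgroup.closure X = ⊤ →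
    (∀ x ∈ X, x ^ e = 1) → ∀ g : G, g ^ e ^ c = 1 := by
  intro c
  induction c with
  | zero =>
      intro G _ hbot e X hgen hX g
      have hg : g ∈ (⊥ : Subgroup G) := hbot ▸ Subgroup.mem_top g
      rw [Subgroup.mem_bot] at hg
      simp [hg]
  | succ c ih =>
      intro G _ hbot e X hgen hX g
      -- the last term of the series is central
      have hcen : Subgroup.lowerCentralSeries (⊤ : Subgroup G) c ≤ Subgroup.center G := by
        intro n hn
        rw [Subgroup.mem_center_iff]
        intro a
        have hcomm : ⁅n, a⁆ ∈ Subgroup.lowerCentralSeries (⊤ : Subgroup G) (c + 1) :=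
          Subgroup.commutator_mem_commutator hn (Subgroup.mem_top a)
        rw [hbot, Subgroup.mem_bot, commutatorElement_eq_one_iff_commute] at hcomm
        exact hcomm.symm
      -- every element of the last term has order dividing e
      have claimC : ∀ n ∈ Subgroup.lowerCentralSeries (⊤ : Subgroup G) c, n ^ e = 1 := by
        cases c with
        | zero =>
            intro n _
            have hn' : n ∈ Subgroup.closure X := by rw [hgen]; exact Subgroup.mem_top n
            exact central_closure_pow (by rw [hgen]; exact hcen) e hX n hn'
        | succ c' =>
            have hcen' : ∀ p, p ∈ Subgroup.lowerCentralSeries (⊤ : Subgroup G) c' → ∀ a : G,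
                ⁅p, a⁆ ∈ Subgroup.center G := fun p hp a =>
              hcen (Subgroup.commutator_mem_commutator hp (Subgroup.mem_top a))
            rw [show Subgroup.lowerCentralSeries (⊤ : Subgroup G) (c' + 1) = ⁅Subgroup.lowerCentralSeries (⊤ : Subgroup G) c', ⊤⁆ from rfl,
              Subgroup.commutator_def]
            refine central_closure_pow ?_ e ?_
            · rw [← Subgroup.commutator_def]; exact hcen
            · rintro s ⟨p, hp, q, -, rfl⟩
              -- the commutator map with p is a homomorphism into the center
              have hφmul : ∀ a b : G, ⁅p, a * b⁆ = ⁅p, a⁆ * ⁅p, b⁆ := by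
                intro a b
                have h1 : ⁅p, a * b⁆ = ⁅p, a⁆ * (a * ⁅p, b⁆ * a⁻¹) := by
                  simp only [commutatorElement_def]; group
                have h2 : a * ⁅p, b⁆ = ⁅p, b⁆ * a :=
                  (Subgroup.mem_center_iff.mp (hcen' p hp b) a)
                rw [h1, h2, mul_inv_cancel_right]
              set φ : G →* Subgroup.center G :=
                { toFun := fun a => ⟨⁅p, a⁆, hcen' p hp a⟩
                  map_one' := by ext; simp
                  map_mul' := fun a b => by ext; exact hφmul a b } with hφ
              set ψ : G →* Subgroup.center G := (powMonoidHom e).comp φ with hψ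
              have hψ1 : ∀ x ∈ X, ψ x = 1 := by
                intro x hx
                have : ψ x = φ (x ^ e) := (map_pow φ x e).symm
                rw [this, hX x hx, map_one]
              have hker : (⊤ : Subgroup G) ≤ ψ.ker := by
                rw [← hgen]
                exact (Subgroup.closure_le _).mpr hψ1
              have hq : ψ q = 1 := hker (Subgroup.mem_top q)
              have : (⁅p, q⁆ : G) ^ e = ((ψ q : Subgroup.center G) : G) := rfl
              rw [this, hq]; rfl
      -- pass to the quotient by the last term
      set N := Subgroup.lowerCentralSeries (⊤ : Subgroup G) c
      let mk : G →* G ⧸ N := QuotientGroup.mk' N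
      have hmksurj : Function.Surjective mk := QuotientGroup.mk'_surjective N
      have hQbot : Subgroup.lowerCentralSeries (⊤ : Subgroup (G ⧸ N)) c = ⊥ := by
        rw [← lcs_map_surjective mk hmksurj c]
        rw [Subgroup.map_eq_bot_iff, QuotientGroup.ker_mk']
      have hQgen : Subgroup.closure (mk '' X) = ⊤ := by
        rw [← MonoidHom.map_closure, hgen]
        exact Subgroup.map_top_of_surjective mk hmksurj
      have hQX : ∀ y ∈ mk '' X, y ^ e = 1 := by
        rintro y ⟨x, hx, rfl⟩
        rw [← map_pow, hX x hx, map_one]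
      have hq := ih hQbot e (mk '' X) hQgen hQX (mk g)
      rw [← map_pow] at hq
      have hmem : g ^ e ^ c ∈ N := by
        rwa [← QuotientGroup.ker_mk' N, MonoidHom.mem_ker]
      have := claimC _ hmem
      rw [pow_succ, pow_mul]
      exact this

/-- A finite nilpotent group of class (at most) `c` generated by elements
of order dividing `e` has exponent dividing `e^c`. -/
theorem stmt_13 {G : Type*} [Group G] [Finite G] [Group.IsNilpotent G] (c e : ℕ)
    (hc : Group.nilpotencyClass G ≤ c)
    (X : Set G) (hgen : Subgroup.closure X = ⊤) (hX : ∀ x ∈ X, x ^ e = 1) :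
    Monoid.exponent G ∣ e ^ c := by
  have hbot : Subgroup.lowerCentralSeries (⊤ : Subgroup G) c = ⊥ :=
    Subgroup.lowerCentralSeries_eq_bot_iff_nilpotencyClass_le.mpr hc
  exact Monoid.exponent_dvd_of_forall_pow_eq_one (aux_pow c hbot e X hgen hX)
end

section
/- Let G be a finite group admitting a coprime automorphism φ of order n, and suppose G = [G,φ]. Let F = F(G) be the Fitting subgroup and N = ⟨[F,φ]^G⟩ the normal closure of [F,φ] in G. Then the image of F in G/N is contained in Z(G/N), and consequently the Fitting height of G/N is at most h(G) − 1 when h(G) ≥ 2. -/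
/-- The Fitting subgroup of a group: the join of all nilpotent normal subgroups. -/
def fitting (G : Type u) [Group G] : Subgroup G :=
  ⨆ H ∈ {H : Subgroup G | H.Normal ∧ Group.IsNilpotent H}, H

/-- `FittingHeightLE G h` says the Fitting height of `G` is at most `h`. -/
def FittingHeightLE : ∀ (G : Type u) [Group G], ℕ → Prop
  | G, _, 0 => Subsingleton G
  | G, _, (h + 1) => ∃ (N : Subgroup G) (hN : N.Normal), Group.IsNilpotent N ∧
      (letI := hN; FittingHeightLE (G ⧸ N) h)

lemma le_fitting {G : Type u} [Group G] {M : Subgroup G} (h1 : M.Normal)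
    (h2 : Group.IsNilpotent M) : M ≤ fitting G :=
  le_iSup₂ (f := fun (H : Subgroup G) (_ : H ∈ {H : Subgroup G | H.Normal ∧ Group.IsNilpotent H}) => H) M ⟨h1, h2⟩

lemma fitting_normal (G : Type u) [Group G] : (fitting G).Normal := by
  constructor
  intro x hx g
  have key : Subgroup.map (MulAut.conj g).toMonoidHom (fitting G) ≤ fitting G := by
    rw [fitting, Subgroup.map_iSup]
    refine iSup_le fun H => ?_
    rw [Subgroup.map_iSup]
    refine iSup_le fun hH => ?_
    refine le_trans ?_ (le_fitting hH.1 hH.2)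
    rintro _ ⟨y, hy, rfl⟩
    exact hH.1.conj_mem y hy g
  exact key ⟨x, hx, rfl⟩

/-- Fitting height does not increase along surjective homomorphisms. -/
lemma fh_surj : ∀ (h : ℕ) {G H : Type u} [Group G] [Group H] (f : G →* H),
    Function.Surjective f → FittingHeightLE G h → FittingHeightLE H h := by
  intro h
  induction h with
  | zero =>
    intro G H _ _ f hf hG
    have : Subsingleton G := hG
    exact ⟨fun a b => by
      obtain ⟨a', rfl⟩ := hf a
      obtain ⟨b', rfl⟩ := hf b
      rw [Subsingleton.elim a' b']⟩
  | succ h ih =>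
    intro G H _ _ f hf hG
    obtain ⟨M, hMn, hMnil, hq⟩ := hG
    haveI := hMn
    haveI := hMnil
    haveI : (M.map f).Normal := hMn.map f hf
    refine ⟨M.map f, this, nilpotent_of_surjective _ (f.subgroupMap_surjective M), ?_⟩
    set g : G →* H ⧸ M.map f := (QuotientGroup.mk' (M.map f)).comp f with hg
    have hgs : Function.Surjective g :=
      (QuotientGroup.mk'_surjective (M.map f)).comp hf
    have hker : ∀ x ∈ M, g x = 1 := fun x hx =>
      (QuotientGroup.eq_one_iff _).mpr (Subgroup.mem_map_of_mem f hx)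
    refine ih (QuotientGroup.lift M g hker) ?_ hq
    intro y
    obtain ⟨x, rfl⟩ := hgs y
    exact ⟨QuotientGroup.mk x, rfl⟩

/-- Let `G` be a finite group with a coprime automorphism `φ` of order `n`
and `G = [G,φ]`. Let `F` be the Fitting subgroup and `N` the normal closure of `[F,φ]`
in `G`. Then the image of `F` in `G/N` is central, and if `h(G) ≤ h` with `h ≥ 2` then
`h(G/N) ≤ h - 1`. -/
theorem stmt_14 {G : Type u} [Group G] [Finite G] (φ : MulAut G) (n : ℕ)
    (hn : orderOf φ = n) (hcop : (Nat.card G).Coprime n)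
    (hgen : Subgroup.closure (Set.range fun x : G => x⁻¹ * φ x) = ⊤) :
    (∀ x ∈ fitting G,
      (QuotientGroup.mk x :
          G ⧸ Subgroup.normalClosure {g : G | ∃ x ∈ fitting G, x⁻¹ * φ x = g}) ∈
        Subgroup.center
          (G ⧸ Subgroup.normalClosure {g : G | ∃ x ∈ fitting G, x⁻¹ * φ x = g})) ∧
    (∀ h : ℕ, 2 ≤ h → FittingHeightLE G h →
      FittingHeightLE
        (G ⧸ Subgroup.normalClosure {g : G | ∃ x ∈ fitting G, x⁻¹ * φ x = g}) (h - 1)) := by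
  haveI hFnorm : (fitting G).Normal := fitting_normal G
  set N : Subgroup G :=
    Subgroup.normalClosure {g : G | ∃ x ∈ fitting G, x⁻¹ * φ x = g} with hN
  set π : G →* G ⧸ N := QuotientGroup.mk' N with hπdef
  have hπ : Function.Surjective π := QuotientGroup.mk'_surjective N
  have key : ∀ x ∈ fitting G, π (φ x) = π x := by
    intro x hx
    have h1 : π (x⁻¹ * φ x) = 1 :=
      (QuotientGroup.eq_one_iff _).mpr (Subgroup.subset_normalClosure ⟨x, hx, rfl⟩)
    rw [map_mul, map_inv] at h1
    exact (inv_mul_eq_one.mp h1).symm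
  have comm : ∀ (A B X : G ⧸ N), B * X * B⁻¹ = A * X * A⁻¹ → X * (A⁻¹ * B) = (A⁻¹ * B) * X := by
    intro A B X h
    have h1 : A⁻¹ * (B * X * B⁻¹) * B = A⁻¹ * (A * X * A⁻¹) * B := by rw [h]
    calc X * (A⁻¹ * B) = A⁻¹ * (A * X * A⁻¹) * B := by group
    _ = A⁻¹ * (B * X * B⁻¹) * B := h1.symm
    _ = (A⁻¹ * B) * X := by group
  have part1 : ∀ x ∈ fitting G, π x ∈ Subgroup.center (G ⧸ N) := by
    intro x hx
    rw [Subgroup.mem_center_iff]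
    have htop : (⊤ : Subgroup G) ≤ Subgroup.comap π (Subgroup.centralizer {π x}) := by
      rw [← hgen]
      refine (Subgroup.closure_le _).mpr ?_
      rintro _ ⟨a, rfl⟩
      rw [SetLike.mem_coe, Subgroup.mem_comap, Subgroup.mem_centralizer_iff]
      rintro _ rfl
      have hy : π (φ (a * x * a⁻¹)) = π (a * x * a⁻¹) :=
        key _ (hFnorm.conj_mem x hx a)
      simp only [map_mul, map_inv, key x hx] at hy ⊢
      exact comm (π a) (π (φ a)) (π x) hy
    intro y
    obtain ⟨g, rfl⟩ := hπ y
    have hg := htop (Subgroup.mem_top g)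
    rw [Subgroup.mem_comap, Subgroup.mem_centralizer_iff] at hg
    exact (hg (π x) rfl).symm
  refine ⟨part1, ?_⟩
  intro h hh hFH
  obtain ⟨m, rfl⟩ : ∃ m, h = m + 2 := ⟨h - 2, by omega⟩
  show FittingHeightLE (G ⧸ N) (m + 1)
  obtain ⟨M, hMn, hMnil, hq⟩ := hFH
  haveI := hMn
  haveI := hMnil
  have hMF : M ≤ fitting G := le_fitting hMn hMnil
  -- surjection `G ⧸ M → G ⧸ fitting G`
  have h2 : FittingHeightLE (G ⧸ fitting G) (m + 1) := by
    refine fh_surj _ (QuotientGroup.lift M (QuotientGroup.mk' (fitting G))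
      (fun x hx => (QuotientGroup.eq_one_iff _).mpr (hMF hx))) ?_ hq
    intro y
    obtain ⟨x, rfl⟩ := QuotientGroup.mk'_surjective (fitting G) y
    exact ⟨QuotientGroup.mk x, rfl⟩
  obtain ⟨M₂, hM₂n, hM₂nil, hq2⟩ := h2
  haveI := hM₂n
  haveI := hM₂nil
  -- the (central) image of the Fitting subgroup in `G ⧸ N`
  set Q : Subgroup (G ⧸ N) := (fitting G).map π with hQdef
  have hQc : Q ≤ Subgroup.center (G ⧸ N) := by
    rintro _ ⟨x, hx, rfl⟩
    exact part1 x hx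
  haveI hQn : Q.Normal := by
    constructor
    intro q hq g
    rw [Subgroup.mem_center_iff.mp (hQc hq) g, mul_assoc, mul_inv_cancel, mul_one]
    exact hq
  -- the induced map `G ⧸ fitting G → (G ⧸ N) ⧸ Q`
  set δ : G ⧸ fitting G →* (G ⧸ N) ⧸ Q :=
    QuotientGroup.lift (fitting G) ((QuotientGroup.mk' Q).comp π)
      (fun x hx => (QuotientGroup.eq_one_iff _).mpr ⟨x, hx, rfl⟩) with hδdef
  have hδ : Function.Surjective δ := by
    intro y
    obtain ⟨z, rfl⟩ := QuotientGroup.mk'_surjective Q y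
    obtain ⟨g, rfl⟩ := hπ z
    exact ⟨QuotientGroup.mk g, rfl⟩
  haveI hM₂δn : (M₂.map δ).Normal := hM₂n.map δ hδ
  haveI hM₂δnil : Group.IsNilpotent (M₂.map δ) :=
    nilpotent_of_surjective _ (δ.subgroupMap_surjective M₂)
  set P : Subgroup (G ⧸ N) := (M₂.map δ).comap (QuotientGroup.mk' Q) with hPdef
  haveI hPn : P.Normal := hM₂δn.comap _
  have hQP : Q ≤ P := by
    intro q hq
    rw [Subgroup.mem_comap]
    have : QuotientGroup.mk' Q q = 1 := (QuotientGroup.eq_one_iff _).mpr hq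
    rw [this]
    exact one_mem _
  -- P is nilpotent: central extension of a nilpotent group
  have hPnil : Group.IsNilpotent P := by
    set ψ : P →* (M₂.map δ) :=
      ((QuotientGroup.mk' Q).comp P.subtype).codRestrict (M₂.map δ)
        (fun p => p.2) with hψdef
    refine isNilpotent_of_ker_le_center ψ ?_
    intro p hp
    have hpQ : (p : G ⧸ N) ∈ Q := by
      have : ((QuotientGroup.mk' Q).comp P.subtype) p = 1 := by
        have := congrArg (Subtype.val) (MonoidHom.mem_ker.mp hp)
        exact this
      exact (QuotientGroup.eq_one_iff _).mp this
    rw [Subgroup.mem_center_iff]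
    intro y
    ext
    exact Subgroup.mem_center_iff.mp (hQc hpQ) y
  -- surjection `(G ⧸ fitting G) ⧸ M₂ → (G ⧸ N) ⧸ P`
  have hFP : ∀ x ∈ fitting G, ((QuotientGroup.mk' P).comp π) x = 1 :=
    fun x hx => (QuotientGroup.eq_one_iff _).mpr (hQP ⟨x, hx, rfl⟩)
  set ρ : G ⧸ fitting G →* (G ⧸ N) ⧸ P :=
    QuotientGroup.lift (fitting G) ((QuotientGroup.mk' P).comp π) hFP with hρdef
  have hρker : ∀ y ∈ M₂, ρ y = 1 := by
    intro y hy
    induction y using QuotientGroup.induction_on with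
    | H g =>
      refine (QuotientGroup.eq_one_iff _).mpr ?_
      rw [Subgroup.mem_comap]
      exact ⟨QuotientGroup.mk g, hy, rfl⟩
  set θ : (G ⧸ fitting G) ⧸ M₂ →* (G ⧸ N) ⧸ P :=
    QuotientGroup.lift M₂ ρ hρker with hθdef
  have hθs : Function.Surjective θ := by
    intro y
    obtain ⟨z, rfl⟩ := QuotientGroup.mk'_surjective P y
    obtain ⟨g, rfl⟩ := hπ z
    exact ⟨QuotientGroup.mk (QuotientGroup.mk g), rfl⟩
  exact ⟨P, hPn, hPnil, fh_surj m θ hθs hq2⟩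
end
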